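/- Let Γ be a group, G a topological group, and f : Γ → G a map such that the subgroup of G generated by f(Γ) is dense in G. Then the topological closure of the subgroup of G generated by the defect set D_f is a normal subgroup of G. -/

import Mathlib

/-- The defect set of a map `f : Γ → G`:
`D_f = { f(y)⁻¹ f(x)⁻¹ f(xy) : x, y ∈ Γ }`. -/
def defectSet {Γ G : Type*} [Group Γ] [Group G] (f : Γ → G) : Set G :=
  {d | ∃ x y : Γ, d = (f y)⁻¹ * (f x)⁻¹ * f (x * y)}

/-- If the subgroup generated by the image of `f` is dense in `G`, then the topological
closure of the subgroup generated by the defect set is normal in `G`. -/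
theorem defect_group_closure_normal {Γ G : Type*} [Group Γ] [Group G]
    [TopologicalSpace G] [IsTopologicalGroup G] (f : Γ → G)
    (hdense : Dense ((Subgroup.closure (Set.range f) : Subgroup G) : Set G)) :
    ((Subgroup.closure (defectSet f)).topologicalClosure).Normal := by
  set N := Subgroup.closure (defectSet f) with hNdef
  set K := N.topologicalClosure with hKdef
  -- the key algebraic identity: f(a)⁻¹ d(x,y) f(a) = d(y,a) d(x,ya) d(xy,a)⁻¹
  have key : ∀ a x y : Γ, (f a)⁻¹ * ((f y)⁻¹ * (f x)⁻¹ * f (x * y)) * f a =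
      ((f a)⁻¹ * (f y)⁻¹ * f (y * a)) * ((f (y * a))⁻¹ * (f x)⁻¹ * f (x * (y * a))) *
        ((f a)⁻¹ * (f (x * y))⁻¹ * f ((x * y) * a))⁻¹ := by
    intro a x y
    rw [mul_assoc x y a]
    group
  -- conjugation by f(a)⁻¹ sends the defect set into N
  have conj1 : ∀ a : Γ, ∀ d ∈ defectSet f, (f a)⁻¹ * d * f a ∈ N := by
    rintro a d ⟨x, y, rfl⟩
    rw [key a x y]
    exact mul_mem (mul_mem (Subgroup.subset_closure ⟨y, a, rfl⟩)
      (Subgroup.subset_closure ⟨x, y * a, rfl⟩))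
      (inv_mem (Subgroup.subset_closure ⟨x * y, a, rfl⟩))
  -- hence conjugation by f(a)⁻¹ sends N into N
  have conjN1 : ∀ a : Γ, ∀ n ∈ N, (f a)⁻¹ * n * f a ∈ N := by
    intro a n hn
    induction hn using Subgroup.closure_induction with
    | mem x hx => exact conj1 a x hx
    | one => simpa using one_mem N
    | mul x y hx hy px py =>
        have : (f a)⁻¹ * (x * y) * f a =
            ((f a)⁻¹ * x * f a) * ((f a)⁻¹ * y * f a) := by group
        rw [this]; exact mul_mem px py
    | inv x hx px =>
        have : (f a)⁻¹ * x⁻¹ * f a = ((f a)⁻¹ * x * f a)⁻¹ := by group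
        rw [this]; exact inv_mem px
  -- f(1) ∈ N
  have hf1 : f 1 ∈ N := by
    have h : (f (1 : Γ))⁻¹ ∈ defectSet f := ⟨1, 1, by simp⟩
    simpa using inv_mem (Subgroup.subset_closure h)
  -- n_a := f(a⁻¹)⁻¹ f(a)⁻¹ ∈ N
  have hna : ∀ a : Γ, (f a⁻¹)⁻¹ * (f a)⁻¹ ∈ N := by
    intro a
    have h : (f a⁻¹)⁻¹ * (f a)⁻¹ * f (a * a⁻¹) ∈ defectSet f := ⟨a, a⁻¹, rfl⟩
    have := mul_mem (Subgroup.subset_closure h) (inv_mem hf1)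
    simpa [mul_assoc, mul_inv_cancel] using this
  -- conjugation by f(a) also sends N into N
  have conjN2 : ∀ a : Γ, ∀ n ∈ N, f a * n * (f a)⁻¹ ∈ N := by
    intro a n hn
    have h1 : (f a⁻¹)⁻¹ * n * f a⁻¹ ∈ N := conjN1 a⁻¹ n hn
    have h2 : ((f a⁻¹)⁻¹ * (f a)⁻¹)⁻¹ * ((f a⁻¹)⁻¹ * n * f a⁻¹) *
        ((f a⁻¹)⁻¹ * (f a)⁻¹) ∈ N := mul_mem (mul_mem (inv_mem (hna a)) h1) (hna a)
    have heq : ((f a⁻¹)⁻¹ * (f a)⁻¹)⁻¹ * ((f a⁻¹)⁻¹ * n * f a⁻¹) *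
        ((f a⁻¹)⁻¹ * (f a)⁻¹) = f a * n * (f a)⁻¹ := by group
    rwa [heq] at h2
  -- extend conjugation stability to the topological closure K
  have conjK : ∀ g : G, (∀ n ∈ N, g * n * g⁻¹ ∈ N) → ∀ k ∈ K, g * k * g⁻¹ ∈ K := by
    intro g hg k hk
    have hmaps : Set.MapsTo (fun x => g * x * g⁻¹) (N : Set G) (N : Set G) := hg
    have hcont : Continuous fun x : G => g * x * g⁻¹ :=
      (continuous_const.mul continuous_id).mul continuous_const
    exact hmaps.closure hcont hk
  have conjK1 : ∀ a : Γ, ∀ k ∈ K, f a * k * (f a)⁻¹ ∈ K := fun a =>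
    conjK (f a) (conjN2 a)
  have conjK2 : ∀ a : Γ, ∀ k ∈ K, (f a)⁻¹ * k * f a ∈ K := by
    intro a
    have := conjK (f a)⁻¹ (by intro n hn; simpa using conjN1 a n hn)
    simpa using this
  -- the set of elements normalizing K in both directions
  set S : Set G := ⋂ k : K, {g : G | g * k * g⁻¹ ∈ K} ∩ {g : G | g⁻¹ * k * g ∈ K}
    with hSdef
  have memS : ∀ g : G, g ∈ S ↔ ∀ k ∈ K, g * k * g⁻¹ ∈ K ∧ g⁻¹ * k * g ∈ K := by
    intro g
    constructor
    · intro h k hk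
      exact Set.mem_iInter.1 h ⟨k, hk⟩
    · intro h
      exact Set.mem_iInter.2 fun k => ⟨(h k k.2).1, (h k k.2).2⟩
  have hSclosed : IsClosed S := by
    refine isClosed_iInter fun k => IsClosed.inter ?_ ?_
    · exact IsClosed.preimage ((continuous_id.mul continuous_const).mul continuous_inv)
        (Subgroup.isClosed_topologicalClosure N)
    · exact IsClosed.preimage ((continuous_inv.mul continuous_const).mul continuous_id)
        (Subgroup.isClosed_topologicalClosure N)
  -- the subgroup generated by the range of f lies in S
  have hsub : ((Subgroup.closure (Set.range f) : Subgroup G) : Set G) ⊆ S := by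
    intro g hg
    rw [memS]
    induction hg using Subgroup.closure_induction with
    | mem x hx =>
        obtain ⟨a, rfl⟩ := hx
        exact fun k hk => ⟨conjK1 a k hk, conjK2 a k hk⟩
    | one =>
        intro k hk
        constructor <;> simpa using hk
    | mul x y hx hy px py =>
        intro k hk
        constructor
        · have : x * y * k * (x * y)⁻¹ = x * (y * k * y⁻¹) * x⁻¹ := by group
          rw [this]; exact (px _ ((py k hk).1)).1
        · have : (x * y)⁻¹ * k * (x * y) = y⁻¹ * (x⁻¹ * k * x) * y := by group
          rw [this]; exact (py _ ((px k hk).2)).2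
    | inv x hx px =>
        intro k hk
        refine ⟨?_, ?_⟩
        · have : x⁻¹ * k * x⁻¹⁻¹ = x⁻¹ * k * x := by group
          rw [this]; exact (px k hk).2
        · have : x⁻¹⁻¹ * k * x⁻¹ = x * k * x⁻¹ := by group
          rw [this]; exact (px k hk).1
  -- by density, S = G
  have hall : ∀ g : G, g ∈ S := by
    intro g
    have h1 : closure ((Subgroup.closure (Set.range f) : Subgroup G) : Set G) ⊆ S := by
      rw [← hSclosed.closure_eq]
      exact closure_mono hsub
    have h2 : g ∈ closure ((Subgroup.closure (Set.range f) : Subgroup G) : Set G) := by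
      rw [hdense.closure_eq]; trivial
    exact h1 h2
  exact ⟨fun n hn g => ((memS g).1 (hall g) n hn).1⟩
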